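/- Let q > 2, let 3 ≤ r ≤ n, let T be a point of PG(1,q^n) and A a set of q^{r-1} points of PG(1,q^n) with T ∉ A. Suppose that for any two distinct points P, Q ∈ A, the unique q-subline through T, P, Q is contained in {T} ∪ A (i.e. for every 2-dimensional K-subspace M of L^2 with |B(M)| = q+1 and T, P, Q ∈ B(M) one has B(M) ⊆ {T} ∪ A). Then there exists an r-dimensional K-subspace U₀ of L^2 with B(U₀) = {T} ∪ A and dim_K(U₀ ∩ T) = r-1; that is, {T} ∪ A is an F_q-club of rank r with head T. -/

import Mathlib

open Submodule Module

lemma exists_submodule_of_lineClosed {K L : Type*} [Field K] [Field L] [Algebra K L]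
    (hK : ∃ μ : K, μ ≠ 0 ∧ μ ≠ 1)
    (S : Set L) (s₀ : L) (hs₀ : s₀ ∈ S)
    (hline : ∀ a ∈ S, ∀ b ∈ S, ∀ μ : K, μ • a + (1 - μ) • b ∈ S) :
    ∃ V : Submodule K L, ∀ x : L, x ∈ V ↔ x + s₀ ∈ S := by
  have hsmul : ∀ x : L, x + s₀ ∈ S → ∀ c : K, c • x + s₀ ∈ S := by
    intro x hx c
    have h := hline _ hx _ hs₀ c
    have e : c • (x + s₀) + (1 - c) • s₀ = c • x + s₀ := by
      rw [smul_add, sub_smul, one_smul]; abel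
    rwa [e] at h
  obtain ⟨μ, hμ0, hμ1⟩ := hK
  have hμ1' : (1 : K) - μ ≠ 0 := sub_ne_zero.mpr (Ne.symm hμ1)
  have hadd : ∀ x y : L, x + s₀ ∈ S → y + s₀ ∈ S → (x + y) + s₀ ∈ S := by
    intro x y hx hy
    have h1 : (μ⁻¹ * (1 - μ)) • x + s₀ ∈ S := hsmul x hx _
    have h2 := hline _ h1 _ hy μ
    have e : μ • ((μ⁻¹ * (1 - μ)) • x + s₀) + (1 - μ) • (y + s₀)
        = (1 - μ) • (x + y) + s₀ := by
      rw [smul_add, smul_smul, smul_add, smul_add]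
      rw [show μ * (μ⁻¹ * (1 - μ)) = 1 - μ by field_simp]
      have hs : μ • s₀ + (1 - μ) • s₀ = s₀ := by rw [← add_smul]; simp
      conv_rhs => rw [← hs]
      abel
    rw [e] at h2
    have h3 := hsmul _ h2 (1 - μ)⁻¹
    rwa [smul_smul, inv_mul_cancel₀ hμ1', one_smul] at h3
  refine ⟨{ carrier := {x | x + s₀ ∈ S},
            add_mem' := fun hx hy => hadd _ _ hx hy,
            zero_mem' := by simpa using hs₀,
            smul_mem' := fun c x hx => hsmul x hx c }, fun x => Iff.rfl⟩


/-- `BSet L X` is the set of projective points (1-dimensional `L`-subspaces of `W`)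
spanned by the nonzero vectors of `X`. -/
def BSet (L : Type*) [Field L] {W : Type*} [AddCommGroup W] [Module L W]
    (X : Set W) : Set (Submodule L W) :=
  {P | ∃ x ∈ X, x ≠ 0 ∧ P = Submodule.span L {x}}

/-- for `q > 2`, if a `(q^{r-1})`-set `A` of points together with a point
`T ∉ A` is closed under `q`-sublines through `T` and two points of `A`, then
`{T} ∪ A` is an `F_q`-club of rank `r` with head `T`. -/
theorem subline_closed_is_club
    (K L : Type*) [Field K] [Field L] [Algebra K L] [Fintype K] [Fintype L]
    (q r n : ℕ) (hq : Fintype.card K = q) (hq2 : 2 < q)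
    (hr : 3 ≤ r) (hrn : r ≤ n) (hrank : Module.finrank K L = n)
    (T : Submodule L (Fin 2 → L)) (hT : Module.finrank L T = 1)
    (A : Set (Submodule L (Fin 2 → L)))
    (hA : ∀ P ∈ A, Module.finrank L P = 1)
    (hAcard : A.ncard = q ^ (r - 1)) (hTA : T ∉ A)
    (hclosed : ∀ P ∈ A, ∀ Q ∈ A, P ≠ Q →
      ∀ M : Submodule K (Fin 2 → L), Module.finrank K M = 2 →
        (BSet L (M : Set (Fin 2 → L))).ncard = q + 1 →
        T ∈ BSet L (M : Set (Fin 2 → L)) →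
        P ∈ BSet L (M : Set (Fin 2 → L)) →
        Q ∈ BSet L (M : Set (Fin 2 → L)) →
        BSet L (M : Set (Fin 2 → L)) ⊆ insert T A) :
    ∃ U₀ : Submodule K (Fin 2 → L), Module.finrank K U₀ = r ∧
      BSet L (U₀ : Set (Fin 2 → L)) = insert T A ∧
      Module.finrank K ↥(U₀ ⊓ T.restrictScalars K) = r - 1 := by
  classical
  haveI : Module.Finite K (Fin 2 → L) := Module.Finite.of_finite
  haveI : Module.Finite K L := Module.Finite.of_finite
  -- generator of T
  have hTbot : T ≠ ⊥ := by
    intro h; rw [h, finrank_bot] at hT; omega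
  obtain ⟨t, htT, ht0⟩ := Submodule.ne_bot_iff T |>.mp hTbot
  have hTt : T = span L {t} := by
    refine (Submodule.eq_of_le_of_finrank_eq ((span_singleton_le_iff_mem t T).mpr htT) ?_).symm
    rw [finrank_span_singleton ht0, hT]
  -- a vector outside T
  have hTtop : T < ⊤ := by
    refine lt_top_iff_ne_top.mpr ?_
    intro h
    rw [h, finrank_top, Module.finrank_fin_fun] at hT
    omega
  obtain ⟨s, -, hs⟩ := SetLike.exists_of_lt hTtop
  -- independence
  have hindep : ∀ α β : L, α • s + β • t = 0 → α = 0 ∧ β = 0 := by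
    intro α β h
    by_cases hα : α = 0
    · refine ⟨hα, ?_⟩
      rw [hα, zero_smul, zero_add] at h
      exact (smul_eq_zero.mp h).resolve_right ht0
    · exfalso
      apply hs
      have : s = (-β / α) • t := by
        have h' : α • s = -(β • t) := by
          rw [← add_eq_zero_iff_eq_neg] at *; rw [← h]
        calc s = α⁻¹ • (α • s) := by rw [smul_smul, inv_mul_cancel₀ hα, one_smul]
          _ = (-β / α) • t := by
              rw [h', smul_neg, smul_smul, ← neg_smul, neg_div, div_eq_inv_mul]
      rw [hTt, this]
      exact smul_mem _ _ (mem_span_singleton_self t)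
  have hvec_ne : ∀ c : L, s + c • t ≠ 0 := by
    intro c h
    have := (hindep 1 c (by rw [one_smul]; exact h)).1
    simp at this
  -- span {t, s} = ⊤
  have htop : span L {t, s} = ⊤ := by
    apply Submodule.eq_top_of_finrank_eq
    rw [Module.finrank_fin_fun]
    have h1 : T < span L {t, s} := by
      rw [hTt]
      refine lt_of_le_of_ne (span_mono (by simp)) ?_
      intro h
      exact hs (hTt ▸ h ▸ subset_span (by simp : s ∈ ({t, s} : Set _)))
    have h2 : finrank L (span L ({t, s} : Set (Fin 2 → L))) ≤ 2 := by
      simpa [Module.finrank_fin_fun] using Submodule.finrank_le (span L ({t, s} : Set (Fin 2 → L)))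
    have h3 := Submodule.finrank_lt_finrank_of_lt h1
    omega
  -- parametrization of points other than T
  set Pt : L → Submodule L (Fin 2 → L) := fun a => span L {s + a • t} with hPt
  have hPtdef : ∀ a : L, Pt a = span L {s + a • t} := fun _ => rfl
  have hPtneT : ∀ a : L, Pt a ≠ T := by
    intro a h
    rw [hPtdef, hTt] at h
    have hm : s + a • t ∈ span L {t} := h ▸ mem_span_singleton_self _
    obtain ⟨c, hc⟩ := mem_span_singleton.mp hm
    have : (1 : L) • s + (a - c) • t = 0 := by
      have e : (1 : L) • s + (a - c) • t = (s + a • t) - c • t := by module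
      rw [e, hc, sub_self]
    simpa using (hindep 1 (a - c) this).1
  have hPtinj : Function.Injective Pt := by
    intro a b h
    rw [hPtdef, hPtdef] at h
    have hm : s + a • t ∈ span L {s + b • t} := by
      rw [← h]; exact mem_span_singleton_self _
    obtain ⟨c, hc⟩ := mem_span_singleton.mp hm
    have : (1 - c) • s + (a - c * b) • t = 0 := by
      have e : (1 - c) • s + (a - c * b) • t = (s + a • t) - c • (s + b • t) := by module
      rw [e, hc, sub_self]
    obtain ⟨h1, h2⟩ := hindep _ _ this
    have hc1 : c = 1 := (sub_eq_zero.mp h1).symm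
    rw [hc1, one_mul] at h2
    exact sub_eq_zero.mp h2
  -- every point of A is Pt a for some a
  have hrep : ∀ P ∈ A, ∃ a : L, P = Pt a := by
    intro P hP
    have hPT : P ≠ T := fun h => hTA (h ▸ hP)
    have hPbot : P ≠ ⊥ := by
      intro h; have := hA P hP; rw [h, finrank_bot] at this; omega
    obtain ⟨x, hxP, hx0⟩ := Submodule.ne_bot_iff P |>.mp hPbot
    have hPx : P = span L {x} := by
      refine (Submodule.eq_of_le_of_finrank_eq ((span_singleton_le_iff_mem x P).mpr hxP) ?_).symm
      rw [finrank_span_singleton hx0, hA P hP]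
    have hx : x ∈ span L ({t, s} : Set (Fin 2 → L)) := htop ▸ mem_top
    obtain ⟨c, d, hcd⟩ := Submodule.mem_span_pair.mp hx
    have hd : d ≠ 0 := by
      intro hd0
      rw [hd0, zero_smul, add_zero] at hcd
      have hc0 : c ≠ 0 := by rintro rfl; rw [zero_smul] at hcd; exact hx0 hcd.symm
      apply hPT
      rw [hPx, ← hcd, Submodule.span_singleton_smul_eq (IsUnit.mk0 c hc0), hTt]
    refine ⟨c / d, ?_⟩
    have hxd : s + (c / d) • t = d⁻¹ • x := by
      rw [← hcd]; match_scalars <;> field_simp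
    rw [hPx, hPtdef, hxd,
      Submodule.span_singleton_smul_eq (IsUnit.mk0 _ (inv_ne_zero hd))]
  -- the parameter set
  set S : Set L := {a : L | Pt a ∈ A} with hS
  have hSA : Pt '' S = A := by
    apply Set.Subset.antisymm
    · rintro P ⟨a, ha, rfl⟩; exact ha
    · intro P hP
      obtain ⟨a, rfl⟩ := hrep P hP
      exact ⟨a, hP, rfl⟩
  have hScard : S.ncard = q ^ (r - 1) := by
    rw [← hAcard, ← hSA, Set.ncard_image_of_injective _ hPtinj]
  have einj : Function.Injective (algebraMap K L) := (algebraMap K L).injective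
  have hlineS : ∀ a ∈ S, ∀ b ∈ S, ∀ μ : K, μ • a + (1 - μ) • b ∈ S := by
    intro a ha b hb μ
    by_cases hab : a = b
    · subst hab
      have e : μ • a + (1 - μ) • a = a := by rw [← add_smul]; simp
      rwa [e]
    have hab' : a - b ≠ 0 := sub_ne_zero.mpr hab
    set u : Fin 2 → L := s + a • t with hu
    set w : Fin 2 → L := s + b • t with hw
    set M : Submodule K (Fin 2 → L) := span K {u, w} with hM
    have huM : u ∈ M := subset_span (by simp)
    have hwM : w ∈ M := subset_span (by simp)
    have hcomb : ∀ c d : K, c • u + d • w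
        = (algebraMap K L (c + d)) • s
          + ((algebraMap K L c) * a + (algebraMap K L d) * b) • t := by
      intro c d
      rw [← algebraMap_smul L c u, ← algebraMap_smul L d w, hu, hw, map_add]
      match_scalars <;> ring
    have hfr : finrank K M = 2 := by
      have hli : LinearIndependent K ![u, w] := by
        rw [LinearIndependent.pair_iff]
        intro c d hcd
        rw [hcomb] at hcd
        obtain ⟨h1, h2⟩ := hindep _ _ hcd
        have hcd0 : c + d = 0 := einj (by rw [map_zero]; exact h1)
        have hd : d = -c := eq_neg_of_add_eq_zero_right hcd0
        rw [hd, map_neg] at h2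
        have h3 : algebraMap K L c * (a - b) = 0 := by ring_nf; linear_combination h2
        have hc0 : c = 0 := by
          rcases mul_eq_zero.mp h3 with h | h
          · exact einj (by rw [map_zero]; exact h)
          · exact absurd h hab'
        exact ⟨hc0, by rw [hd, hc0, neg_zero]⟩
      have := finrank_span_eq_card hli
      rw [Matrix.range_cons_cons_empty] at this
      simpa using this
    set lineL : Set L :=
      (fun ν : K => algebraMap K L ν * a + (1 - algebraMap K L ν) * b) '' Set.univ with hlineL
    have hBM : BSet L (M : Set (Fin 2 → L)) = insert T (Pt '' lineL) := by
      apply Set.Subset.antisymm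
      · rintro P ⟨x, hxM, hx0, rfl⟩
        obtain ⟨c, d, hcd⟩ := Submodule.mem_span_pair.mp (SetLike.mem_coe.mp hxM)
        by_cases hcd0 : c + d = 0
        · have hd : d = -c := eq_neg_of_add_eq_zero_right hcd0
          have hx : x = (algebraMap K L c * (a - b)) • t := by
            rw [← hcd, hcomb, hcd0, map_zero, zero_smul, zero_add, hd, map_neg]
            match_scalars; ring
          have hc0 : c ≠ 0 := by
            rintro rfl
            apply hx0
            rw [hx, map_zero, zero_mul, zero_smul]
          apply Set.mem_insert_iff.mpr; left
          rw [hx, Submodule.span_singleton_smul_eq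
            (IsUnit.mk0 _ (mul_ne_zero ((map_ne_zero (algebraMap K L)).mpr hc0) hab')), hTt]
        · have hE : algebraMap K L (c + d) ≠ 0 := (map_ne_zero (algebraMap K L)).mpr hcd0
          set g : L := (algebraMap K L c * a + algebraMap K L d * b) / algebraMap K L (c + d)
            with hg
          have hgline : g ∈ lineL := by
            refine ⟨c / (c + d), Set.mem_univ _, ?_⟩
            show algebraMap K L (c / (c + d)) * a
                + (1 - algebraMap K L (c / (c + d))) * b = g
            rw [map_div₀, hg, map_add]
            have hE' : algebraMap K L c + algebraMap K L d ≠ 0 := by rwa [← map_add]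
            field_simp
            ring
          have hx : x = (algebraMap K L (c + d)) • (s + g • t) := by
            rw [← hcd, hcomb, smul_add, smul_smul, hg,
              mul_div_cancel₀ _ hE]
          apply Set.mem_insert_iff.mpr; right
          refine ⟨g, hgline, ?_⟩
          rw [hPtdef, hx, Submodule.span_singleton_smul_eq (IsUnit.mk0 _ hE)]
      · intro P hP
        rcases Set.mem_insert_iff.mp hP with rfl | ⟨ν, hν, rfl⟩
        · refine ⟨u - w, SetLike.mem_coe.mpr (sub_mem huM hwM), ?_, ?_⟩
          · rw [hu, hw, show s + a • t - (s + b • t) = (a - b) • t by module]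
            exact smul_ne_zero hab' ht0
          · rw [hu, hw, show s + a • t - (s + b • t) = (a - b) • t by module,
              Submodule.span_singleton_smul_eq (IsUnit.mk0 _ hab'), hTt]
        · obtain ⟨μ', -, rfl⟩ := hν
          refine ⟨μ' • u + (1 - μ') • w, SetLike.mem_coe.mpr
            (add_mem (smul_mem _ _ huM) (smul_mem _ _ hwM)), ?_, ?_⟩
          · rw [hcomb]
            simp only [add_sub_cancel, map_one, one_smul, map_sub]
            rw [show s + (algebraMap K L μ' * a + (1 - algebraMap K L μ') * b) • t
                = s + (algebraMap K L μ' * a + (1 - algebraMap K L μ') * b) • t from rfl]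
            exact hvec_ne _
          · rw [hPtdef, hcomb]
            simp only [add_sub_cancel, map_one, one_smul, map_sub]
    have hTnotim : T ∉ Pt '' lineL := by
      rintro ⟨ν, -, h⟩; exact hPtneT ν h
    have hcard : (BSet L (M : Set (Fin 2 → L))).ncard = q + 1 := by
      rw [hBM]
      have hfin : (Pt '' lineL).Finite := ((Set.finite_univ).image _).image _
      rw [Set.ncard_insert_of_notMem hTnotim hfin]
      have hlinj : Function.Injective
          (fun ν : K => algebraMap K L ν * a + (1 - algebraMap K L ν) * b) := by
        intro ν₁ ν₂ h
        simp only at h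
        have h3 : (algebraMap K L ν₁ - algebraMap K L ν₂) * (a - b) = 0 := by
          linear_combination h
        rcases mul_eq_zero.mp h3 with h4 | h4
        · exact einj (by rw [sub_eq_zero] at h4; exact h4)
        · exact absurd h4 hab'
      rw [hlineL, Set.ncard_image_of_injective _ hPtinj,
        Set.ncard_image_of_injective _ hlinj, Set.ncard_univ, Nat.card_eq_fintype_card, hq]
    have hPa : Pt a ∈ A := ha
    have hPb : Pt b ∈ A := hb
    have hPQ : Pt a ≠ Pt b := fun h => hab (hPtinj h)
    have hTM : T ∈ BSet L (M : Set (Fin 2 → L)) := by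
      rw [hBM]; exact Set.mem_insert _ _
    have hPM : Pt a ∈ BSet L (M : Set (Fin 2 → L)) :=
      ⟨u, SetLike.mem_coe.mpr huM, hu ▸ hvec_ne a, hu ▸ hPtdef a⟩
    have hQM : Pt b ∈ BSet L (M : Set (Fin 2 → L)) :=
      ⟨w, SetLike.mem_coe.mpr hwM, hw ▸ hvec_ne b, hw ▸ hPtdef b⟩
    have hsub := hclosed (Pt a) hPa (Pt b) hPb hPQ M hfr hcard hTM hPM hQM
    have hν : (algebraMap K L μ * a + (1 - algebraMap K L μ) * b) ∈ lineL :=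
      ⟨μ, Set.mem_univ _, rfl⟩
    have hmem : Pt (algebraMap K L μ * a + (1 - algebraMap K L μ) * b) ∈ insert T A := by
      apply hsub
      rw [hBM]
      exact Set.mem_insert_iff.mpr (Or.inr ⟨_, hν, rfl⟩)
    have hmemA : Pt (algebraMap K L μ * a + (1 - algebraMap K L μ) * b) ∈ A := by
      rcases Set.mem_insert_iff.mp hmem with h | h
      · exact absurd h (hPtneT _)
      · exact h
    have : μ • a + (1 - μ) • b = algebraMap K L μ * a + (1 - algebraMap K L μ) * b := by
      rw [Algebra.smul_def, Algebra.smul_def, map_sub, map_one]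
    rw [hS, Set.mem_setOf_eq, this]
    exact hmemA
  -- S is nonempty
  have hSfin : S.Finite := Set.toFinite S
  have hSne : S.Nonempty := by
    rw [← Set.ncard_pos hSfin, hScard]
    exact pow_pos (by omega) _
  obtain ⟨s₀, hs₀⟩ := hSne
  have hK3 : ∃ μ : K, μ ≠ 0 ∧ μ ≠ 1 := by
    by_contra h
    push_neg at h
    have hsub : (Finset.univ : Finset K) ⊆ {0, 1} := by
      intro x _
      rcases eq_or_ne x 0 with h0 | h0
      · simp [h0]
      · simp [h x h0]
    have hcard := Finset.card_le_card hsub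
    rw [Finset.card_univ, hq] at hcard
    have h2 : ({0, 1} : Finset K).card ≤ 2 :=
      (Finset.card_insert_le _ _).trans (by simp)
    omega
  obtain ⟨V, hV⟩ := exists_submodule_of_lineClosed hK3 S s₀ hs₀ hlineS
  haveI : Fintype V := Fintype.ofFinite V
  have hVfr : finrank K V = r - 1 := by
    have hVcard : Fintype.card V = q ^ finrank K V := by
      rw [← hq]; exact card_eq_pow_finrank
    have hVset : (V : Set L) = (fun a => a - s₀) '' S := by
      ext x
      rw [SetLike.mem_coe, hV]
      constructor
      · intro h; exact ⟨x + s₀, h, by ring⟩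
      · rintro ⟨y, hy, rfl⟩; simpa using hy
    have hVncard : (V : Set L).ncard = q ^ (r - 1) := by
      rw [hVset, Set.ncard_image_of_injective _ (fun x y h => by
        simpa using congrArg (· + s₀) h), hScard]
    have hNat : Nat.card ↥V = (V : Set L).ncard := by
      rw [← Nat.card_coe_set_eq]
      exact Nat.card_congr ⟨fun x => ⟨x.1, x.2⟩, fun x => ⟨x.1, x.2⟩,
        fun _ => rfl, fun _ => rfl⟩
    have h2 : q ^ finrank K V = q ^ (r - 1) := by
      rw [← hVcard, ← Nat.card_eq_fintype_card, hNat, hVncard]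
    exact Nat.pow_right_injective (by omega) h2
  -- the map v ↦ v • t
  set mulT : L →ₗ[K] (Fin 2 → L) :=
    { toFun := fun v => v • t,
      map_add' := fun x y => add_smul x y t,
      map_smul' := fun c x => by simp [smul_assoc] } with hmulT
  have hmulTapp : ∀ v : L, mulT v = v • t := fun _ => rfl
  have hmulTinj : Function.Injective mulT := by
    intro x y h
    rw [hmulTapp, hmulTapp] at h
    have h0 : (x - y) • t = 0 := by rw [sub_smul, h, sub_self]
    rcases smul_eq_zero.mp h0 with h' | h'
    · exact sub_eq_zero.mp h'
    · exact absurd h' ht0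
  set Vt : Submodule K (Fin 2 → L) := V.map mulT with hVt
  set u₀ : Fin 2 → L := s + s₀ • t with hu₀
  have hu₀0 : u₀ ≠ 0 := hvec_ne s₀
  set U₀ : Submodule K (Fin 2 → L) := span K {u₀} ⊔ Vt with hU₀
  have hVtfr : finrank K Vt = r - 1 := by
    rw [← hVfr]
    exact (Submodule.equivMapOfInjective mulT hmulTinj V).finrank_eq.symm
  have hdisj : span K {u₀} ⊓ Vt = ⊥ := by
    rw [eq_bot_iff]
    rintro x ⟨hx1, hx2⟩
    obtain ⟨c, hc⟩ := mem_span_singleton.mp hx1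
    obtain ⟨v, hvV, hvx⟩ := hx2
    have hvx' : v • t = x := hvx
    have hzero : (algebraMap K L c) • s + (algebraMap K L c * s₀ - v) • t = 0 := by
      have e : (algebraMap K L c) • s + (algebraMap K L c * s₀ - v) • t
          = c • u₀ - v • t := by
        rw [← algebraMap_smul L c u₀, hu₀]; match_scalars <;> ring
      rw [e, hc, hvx', sub_self]
    have hc0 : c = 0 := einj (by rw [map_zero]; exact (hindep _ _ hzero).1)
    rw [mem_bot, ← hc, hc0, zero_smul]
  have hU₀fr : finrank K U₀ = r := by
    have hsum := Submodule.finrank_sup_add_finrank_inf_eq (span K {u₀}) Vt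
    rw [hdisj, finrank_bot, finrank_span_singleton hu₀0, hVtfr] at hsum
    rw [hU₀]
    omega
  have hVne : ∃ v : L, v ∈ V ∧ v ≠ 0 := by
    have hVbot : V ≠ ⊥ := by
      intro h
      rw [h, finrank_bot] at hVfr
      omega
    exact (Submodule.ne_bot_iff V).mp hVbot
  have hBU : BSet L (U₀ : Set (Fin 2 → L)) = insert T A := by
    apply Set.Subset.antisymm
    · rintro P ⟨x, hxU, hx0, rfl⟩
      obtain ⟨y, hy, z, hz, hyz⟩ := Submodule.mem_sup.mp (SetLike.mem_coe.mp hxU)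
      obtain ⟨c, hc⟩ := mem_span_singleton.mp hy
      obtain ⟨v, hvV, hvz⟩ := hz
      have hvz' : v • t = z := hvz
      by_cases hc0 : c = 0
      · have hxz : x = v • t := by rw [← hyz, ← hc, hc0, zero_smul, zero_add, hvz']
        have hv0 : v ≠ 0 := by rintro rfl; apply hx0; rw [hxz, zero_smul]
        apply Set.mem_insert_iff.mpr; left
        rw [hxz, Submodule.span_singleton_smul_eq (IsUnit.mk0 _ hv0), hTt]
      · have hEc : algebraMap K L c ≠ 0 := (map_ne_zero (algebraMap K L)).mpr hc0
        set g : L := s₀ + (algebraMap K L c)⁻¹ * v with hg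
        have hgS : g ∈ S := by
          have h1 : c⁻¹ • v ∈ V := V.smul_mem _ hvV
          have h2 : c⁻¹ • v = (algebraMap K L c)⁻¹ * v := by
            rw [Algebra.smul_def, map_inv₀]
          rw [hV, h2] at h1
          rw [hg]
          rwa [add_comm] at h1
        have hx : x = (algebraMap K L c) • (s + g • t) := by
          rw [← hyz, ← hc, ← hvz', hu₀, hg, ← algebraMap_smul L c]
          match_scalars <;> (field_simp; try ring)
        apply Set.mem_insert_iff.mpr; right
        rw [hx, Submodule.span_singleton_smul_eq (IsUnit.mk0 _ hEc), ← hPtdef]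
        exact hgS
    · intro P hP
      rcases Set.mem_insert_iff.mp hP with rfl | hPA
      · obtain ⟨v, hvV, hv0⟩ := hVne
        refine ⟨v • t, ?_, smul_ne_zero hv0 ht0, ?_⟩
        · exact SetLike.mem_coe.mpr
            (Submodule.mem_sup_right (Submodule.mem_map_of_mem hvV))
        · rw [Submodule.span_singleton_smul_eq (IsUnit.mk0 _ hv0), hTt]
      · obtain ⟨a, haS, rfl⟩ : ∃ a ∈ S, Pt a = P := by
          rw [← hSA] at hPA
          rcases hPA with ⟨a, haS, h⟩
          exact ⟨a, haS, h⟩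
        refine ⟨s + a • t, ?_, hvec_ne a, hPtdef a⟩
        have hmem1 : u₀ ∈ U₀ := Submodule.mem_sup_left (mem_span_singleton_self u₀)
        have haV : a - s₀ ∈ V := by rw [hV]; simpa using haS
        have hmem2 : (a - s₀) • t ∈ U₀ :=
          Submodule.mem_sup_right (Submodule.mem_map_of_mem haV)
        have he : s + a • t = u₀ + (a - s₀) • t := by rw [hu₀]; module
        rw [he]
        exact SetLike.mem_coe.mpr (add_mem hmem1 hmem2)
  have hinter : U₀ ⊓ T.restrictScalars K = Vt := by
    apply le_antisymm
    · rintro x ⟨hxU, hxT⟩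
      obtain ⟨y, hy, z, hz, hyz⟩ := Submodule.mem_sup.mp hxU
      obtain ⟨c, hc⟩ := mem_span_singleton.mp hy
      obtain ⟨v, hvV, hvz⟩ := hz
      have hvz' : v • t = z := hvz
      have hxT' : x ∈ span L {t} := by
        rw [← hTt]
        exact Submodule.restrictScalars_mem K T x |>.mp hxT
      obtain ⟨ω, hω⟩ := mem_span_singleton.mp hxT'
      have hzero : (algebraMap K L c) • s + (algebraMap K L c * s₀ + v - ω) • t = 0 := by
        have e : (algebraMap K L c) • s + (algebraMap K L c * s₀ + v - ω) • t
            = (c • u₀ + v • t) - ω • t := by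
          rw [← algebraMap_smul L c u₀, hu₀]; match_scalars <;> ring
        rw [e, hvz', hc, hyz, hω, sub_self]
      have hc0 : c = 0 := einj (by rw [map_zero]; exact (hindep _ _ hzero).1)
      have hxv : x = v • t := by rw [← hyz, ← hc, hc0, zero_smul, zero_add, hvz']
      exact ⟨v, hvV, hxv.symm⟩
    · intro z hz
      obtain ⟨v, hvV, hvz⟩ := hz
      have hvz' : v • t = z := hvz
      refine Submodule.mem_inf.mpr ⟨Submodule.mem_sup_right ⟨v, hvV, hvz⟩, ?_⟩
      rw [Submodule.restrictScalars_mem, hTt]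
      have hm : v • t ∈ span L {t} := Submodule.smul_mem _ _ (mem_span_singleton_self t)
      rwa [hvz'] at hm
  refine ⟨U₀, hU₀fr, hBU, ?_⟩
  rw [hinter]
  exact hVtfr
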